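/- arXiv:1007.4031 — 2 statements merged into one kernel-verified Lean document; each statement's English description precedes it below -/
import Mathlib

section
/- In the type I almost complete graph (clique of size N-1 plus one peripheral vertex of degree α), the sum of local clustering coefficients, as a function of α on {1,...,N-1}, is symmetric about (N-1)/2: its value at α and at N-1-α coincide. -/
open SimpleGraph Finset

/-- Degree of a vertex (noncomputable, no decidability assumptions). -/
noncomputable def deg {V : Type*} [Fintype V] (G : SimpleGraph V) (u : V) : ℕ :=
  (G.neighborSet u).ncard

/-- Number of edges among the neighbors of `u` (as a rational, each edge counted once). -/
noncomputable def triC {V : Type*} [Fintype V] (G : SimpleGraph V) (u : V) : ℚ :=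
  ({p : V × V | G.Adj u p.1 ∧ G.Adj u p.2 ∧ G.Adj p.1 p.2}.ncard : ℚ) / 2

/-- Local clustering coefficient, with the convention that vertices of degree ≤ 1 have
clustering coefficient 1. -/
noncomputable def clust {V : Type*} [Fintype V] (G : SimpleGraph V) (u : V) : ℚ :=
  if deg G u ≤ 1 then 1 else triC G u / ((deg G u).choose 2)

/-- Sum of local clustering coefficients over all vertices. -/
noncomputable def totalClust {V : Type*} [Fintype V] (G : SimpleGraph V) : ℚ :=
  ∑ u, clust G u

/-- Number of edges of a graph. -/
noncomputable def edgeCount {V : Type*} [Fintype V] (G : SimpleGraph V) : ℕ :=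
  G.edgeSet.ncard

/-- Average distance of a (connected) graph: sum of pairwise shortest-path distances over
all unordered pairs of distinct vertices, divided by `N choose 2`.  (Ordered pairs are summed,
diagonal terms vanish, hence the factor 2.) -/
noncomputable def avgDist {V : Type*} [Fintype V] (G : SimpleGraph V) : ℚ :=
  (∑ u : V, ∑ v : V, (G.dist u v : ℚ)) / (2 * (Fintype.card V).choose 2)

/-- Type I almost complete graph: all vertices other than `p` form a clique, and the
peripheral vertex `p` is adjacent exactly to the vertices in `A`. -/
def acGraphI {V : Type*} [DecidableEq V] (p : V) (A : Finset V) : SimpleGraph V where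
  Adj u v := u ≠ v ∧ ((u ≠ p ∧ v ≠ p) ∨ (u = p ∧ v ∈ A) ∨ (v = p ∧ u ∈ A))
  symm := ⟨by intro u v h; exact ⟨h.1.symm, by tauto⟩⟩
  loopless := ⟨fun u h => h.1 rfl⟩

section Aux

variable {V : Type*} [Fintype V] [DecidableEq V] (p : V) (A : Finset V)

lemma ac_adj (u v : V) : (acGraphI p A).Adj u v ↔
    u ≠ v ∧ ((u ≠ p ∧ v ≠ p) ∨ (u = p ∧ v ∈ A) ∨ (v = p ∧ u ∈ A)) := Iff.rfl

lemma ratio_one {n : ℕ} (hn : 2 ≤ n) :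
    ((n * n - n : ℕ) : ℚ) / 2 / ((n.choose 2 : ℕ) : ℚ) = 1 := by
  have hle : n ≤ n * n := Nat.le_mul_of_pos_left n (by omega)
  rw [Nat.cast_choose_two, Nat.cast_sub hle]
  have h2 : (2:ℚ) ≤ (n:ℚ) := by exact_mod_cast hn
  have hn0 : (n:ℚ) ≠ 0 := by linarith
  have hn1 : (n:ℚ) - 1 ≠ 0 := by intro h; linarith
  push_cast
  field_simp

set_option linter.unusedSectionVars false

lemma nbr_p (hpA : p ∉ A) : (acGraphI p A).neighborSet p = ↑A := by
  ext v
  simp only [mem_neighborSet, ac_adj, Finset.coe_mem, Set.mem_setOf_eq, Finset.mem_coe]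
  constructor
  · rintro ⟨hne, h⟩
    rcases h with ⟨h1, _⟩ | ⟨_, h2⟩ | ⟨h3, h4⟩
    · exact absurd rfl h1
    · exact h2
    · exact absurd h4 hpA
  · intro hv
    have hvp : v ≠ p := fun h => hpA (h ▸ hv)
    refine ⟨fun h => hpA (h ▸ hv), ?_⟩
    tauto

lemma deg_p (hpA : p ∉ A) : deg (acGraphI p A) p = A.card := by
  rw [deg, nbr_p p A hpA, Set.ncard_coe_finset]

lemma tri_p (hpA : p ∉ A) : {q : V × V | (acGraphI p A).Adj p q.1 ∧ (acGraphI p A).Adj p q.2 ∧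
    (acGraphI p A).Adj q.1 q.2} = ↑A.offDiag := by
  ext ⟨x, y⟩
  simp only [Set.mem_setOf_eq, Finset.coe_offDiag, Set.mem_setOf_eq]
  have hx : (acGraphI p A).Adj p x ↔ x ∈ A := by
    rw [← SimpleGraph.mem_neighborSet, nbr_p p A hpA]; simp
  have hy : (acGraphI p A).Adj p y ↔ y ∈ A := by
    rw [← SimpleGraph.mem_neighborSet, nbr_p p A hpA]; simp
  rw [hx, hy, ac_adj]
  constructor
  · rintro ⟨h1, h2, h3, _⟩
    exact ⟨h1, h2, h3⟩
  · rintro ⟨h1, h2, h3⟩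
    exact ⟨h1, h2, h3, Or.inl ⟨fun h => hpA (h ▸ h1), fun h => hpA (h ▸ h2)⟩⟩

lemma clust_p (hpA : p ∉ A) : clust (acGraphI p A) p = 1 := by
  rw [clust]
  by_cases h1 : deg (acGraphI p A) p ≤ 1
  · rw [if_pos h1]
  · rw [if_neg h1, triC, tri_p p A hpA, Set.ncard_coe_finset, offDiag_card,
      deg_p p A hpA]
    exact ratio_one (by rw [deg_p p A hpA] at h1; omega)

lemma adj_memA {u : V} (hpA : p ∉ A) (hu : u ∈ A) (v : V) :
    (acGraphI p A).Adj u v ↔ v ≠ u := by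
  have hup : u ≠ p := fun h => hpA (h ▸ hu)
  rw [ac_adj]
  constructor
  · rintro ⟨h, -⟩; exact h.symm
  · intro hvu
    refine ⟨hvu.symm, ?_⟩
    by_cases hvp : v = p
    · exact Or.inr (Or.inr ⟨hvp, hu⟩)
    · exact Or.inl ⟨hup, hvp⟩

lemma nbr_A {u : V} (hpA : p ∉ A) (hu : u ∈ A) :
    (acGraphI p A).neighborSet u = ↑(univ.erase u) := by
  ext v
  simp [adj_memA p A hpA hu]

lemma deg_A {u : V} (hpA : p ∉ A) (hu : u ∈ A) :
    deg (acGraphI p A) u = Fintype.card V - 1 := by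
  rw [deg, nbr_A p A hpA hu, Set.ncard_coe_finset, card_erase_of_mem (mem_univ u),
    card_univ]

lemma tri_A {u : V} (hpA : p ∉ A) (hu : u ∈ A) :
    {q : V × V | (acGraphI p A).Adj u q.1 ∧ (acGraphI p A).Adj u q.2 ∧
      (acGraphI p A).Adj q.1 q.2} =
    ↑((univ.erase u).offDiag \
      (((univ \ insert p A).image (fun b => (p, b))) ∪
       ((univ \ insert p A).image (fun b => (b, p))))) := by
  have hup : u ≠ p := fun h => hpA (h ▸ hu)
  ext ⟨x, y⟩
  simp only [Set.mem_setOf_eq, adj_memA p A hpA hu, ac_adj, Finset.coe_sdiff,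
    Set.mem_diff, Finset.mem_coe, Finset.mem_offDiag, Finset.mem_erase, mem_univ,
    and_true, Finset.mem_union, Finset.mem_image, Finset.mem_sdiff,
    Finset.mem_insert, Prod.mk.injEq, not_or, not_exists, not_and]
  constructor
  · rintro ⟨hx, hy, hxy, hbig⟩
    refine ⟨⟨hx, hy, hxy⟩, ?_, ?_⟩
    · rintro b ⟨-, hbp, hbA⟩ hpx hby
      subst hby
      rcases hbig with ⟨h, -⟩ | ⟨-, h⟩ | ⟨h, -⟩
      · exact absurd hpx.symm h
      · exact hbA h
      · exact hbp h
    · rintro b ⟨-, hbp, hbA⟩ hbx hpy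
      subst hbx
      rcases hbig with ⟨-, h⟩ | ⟨h, -⟩ | ⟨-, h⟩
      · exact h hpy.symm
      · exact hbp h
      · exact hbA h
  · rintro ⟨⟨hx, hy, hxy⟩, h1, h2⟩
    refine ⟨hx, hy, hxy, ?_⟩
    by_cases hxp : x = p
    · by_cases hyA : y ∈ A
      · exact Or.inr (Or.inl ⟨hxp, hyA⟩)
      · exact absurd rfl (h1 y ⟨trivial, fun h => hxy (hxp.trans h.symm), hyA⟩ hxp.symm)
    · by_cases hyp : y = p
      · by_cases hxA : x ∈ A
        · exact Or.inr (Or.inr ⟨hyp, hxA⟩)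
        · exact absurd hyp.symm (h2 x ⟨trivial, hxp, hxA⟩ rfl)
      · exact Or.inl ⟨hxp, hyp⟩

lemma cardD (hpA : p ∉ A) : (univ \ insert p A).card = Fintype.card V - 1 - A.card := by
  rw [card_sdiff_of_subset (subset_univ _), card_univ, card_insert_of_notMem hpA]
  omega

lemma tri_A_card {u : V} (hpA : p ∉ A) (hu : u ∈ A) :
    ((univ.erase u).offDiag \
      (((univ \ insert p A).image (fun b => (p, b))) ∪
       ((univ \ insert p A).image (fun b => (b, p))))).card =
    (Fintype.card V - 1) * (Fintype.card V - 1) - (Fintype.card V - 1)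
      - 2 * (Fintype.card V - 1 - A.card) := by
  have hup : u ≠ p := fun h => hpA (h ▸ hu)
  have hsub : (((univ \ insert p A).image (fun b => (p, b))) ∪
       ((univ \ insert p A).image (fun b => (b, p)))) ⊆ (univ.erase u).offDiag := by
    intro q hq
    simp only [Finset.mem_union, Finset.mem_image, Finset.mem_sdiff, mem_univ,
      Finset.mem_insert, true_and, not_or] at hq
    rcases hq with ⟨b, ⟨hbp, hbA⟩, rfl⟩ | ⟨b, ⟨hbp, hbA⟩, rfl⟩ <;>
      simp only [Finset.mem_offDiag, Finset.mem_erase, mem_univ, and_true]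
    · exact ⟨hup.symm, fun h => hbA (h ▸ hu), fun h => hbp h.symm⟩
    · exact ⟨fun h => hbA (h ▸ hu), hup.symm, hbp⟩
  rw [card_sdiff_of_subset hsub, offDiag_card, card_erase_of_mem (mem_univ u), card_univ]
  have hdisj : Disjoint ((univ \ insert p A).image (fun b => (p, b)))
      ((univ \ insert p A).image (fun b => (b, p))) := by
    rw [Finset.disjoint_left]
    rintro q hq1 hq2
    simp only [Finset.mem_image, Finset.mem_sdiff, mem_univ, Finset.mem_insert,
      true_and, not_or] at hq1 hq2
    obtain ⟨b, ⟨hbp, -⟩, rfl⟩ := hq1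
    obtain ⟨c, ⟨hcp, -⟩, hc⟩ := hq2
    exact hcp (congrArg Prod.fst hc)
  rw [card_union_of_disjoint hdisj,
    card_image_of_injective _ (fun a b h => (Prod.mk.injEq _ _ _ _).mp h |>.2),
    card_image_of_injective _ (fun a b h => (Prod.mk.injEq _ _ _ _).mp h |>.1),
    cardD p A hpA]
  omega

lemma ratio_two {m k : ℕ} (hm : 2 ≤ m) (hk : k ≤ m - 1) :
    ((m * m - m - 2 * k : ℕ) : ℚ) / 2 / ((m.choose 2 : ℕ) : ℚ) =
      1 - (k : ℚ) / ((m.choose 2 : ℕ) : ℚ) := by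
  have e : m * (m - 1) = m * m - m := by rw [Nat.mul_sub, mul_one]
  have h2 : 2 * (m - 1) ≤ m * (m - 1) := Nat.mul_le_mul_right _ hm
  have h1 : 2 * k ≤ m * m - m := by omega
  have h0 : m ≤ m * m := Nat.le_mul_of_pos_left m (by omega)
  rw [Nat.cast_sub h1, Nat.cast_sub h0, Nat.cast_choose_two]
  have hmq : (2:ℚ) ≤ (m:ℚ) := by exact_mod_cast hm
  have hm0 : (m:ℚ) ≠ 0 := by linarith
  have hm1 : (m:ℚ) - 1 ≠ 0 := by intro h; linarith
  push_cast
  field_simp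

lemma clust_A {u : V} (hpA : p ∉ A) (hu : u ∈ A) (h4 : 4 ≤ Fintype.card V) :
    clust (acGraphI p A) u = 1 - ((Fintype.card V - 1 - A.card : ℕ) : ℚ) /
      (((Fintype.card V - 1).choose 2 : ℕ) : ℚ) := by
  have hd := deg_A p A hpA hu
  have hα : 1 ≤ A.card := card_pos.mpr ⟨u, hu⟩
  rw [clust, if_neg (by omega), triC, tri_A p A hpA hu, Set.ncard_coe_finset,
    tri_A_card p A hpA hu, hd]
  exact ratio_two (by omega) (by omega)

lemma adj_notA {u : V} (hup : u ≠ p) (hu : u ∉ A) (v : V) :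
    (acGraphI p A).Adj u v ↔ v ≠ u ∧ v ≠ p := by
  rw [ac_adj]
  constructor
  · rintro ⟨hne, big⟩
    rcases big with ⟨-, hvp⟩ | ⟨h, -⟩ | ⟨hvp, huA⟩
    · exact ⟨hne.symm, hvp⟩
    · exact absurd h hup
    · exact absurd huA hu
  · rintro ⟨hvu, hvp⟩
    exact ⟨hvu.symm, Or.inl ⟨hup, hvp⟩⟩

lemma nbr_D {u : V} (hup : u ≠ p) (hu : u ∉ A) :
    (acGraphI p A).neighborSet u = ↑((univ.erase u).erase p) := by
  ext v
  simp only [mem_neighborSet, adj_notA p A hup hu, Finset.coe_erase, Set.mem_diff,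
    Finset.mem_coe, Finset.mem_erase, mem_univ, and_true, Set.mem_singleton_iff]
  tauto

lemma deg_D {u : V} (hup : u ≠ p) (hu : u ∉ A) :
    deg (acGraphI p A) u = Fintype.card V - 2 := by
  rw [deg, nbr_D p A hup hu, Set.ncard_coe_finset,
    card_erase_of_mem (by simp [hup.symm]), card_erase_of_mem (mem_univ u), card_univ]
  omega

lemma tri_D {u : V} (hup : u ≠ p) (hu : u ∉ A) :
    {q : V × V | (acGraphI p A).Adj u q.1 ∧ (acGraphI p A).Adj u q.2 ∧
      (acGraphI p A).Adj q.1 q.2} = ↑(((univ.erase u).erase p).offDiag) := by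
  ext ⟨x, y⟩
  simp only [Set.mem_setOf_eq, adj_notA p A hup hu, ac_adj, Finset.mem_coe,
    Finset.mem_offDiag, Finset.mem_erase, mem_univ, and_true]
  constructor
  · rintro ⟨⟨hxu, hxp⟩, ⟨hyu, hyp⟩, hxy, -⟩
    exact ⟨⟨hxp, hxu⟩, ⟨hyp, hyu⟩, hxy⟩
  · rintro ⟨⟨hxp, hxu⟩, ⟨hyp, hyu⟩, hxy⟩
    exact ⟨⟨hxu, hxp⟩, ⟨hyu, hyp⟩, hxy, Or.inl ⟨hxp, hyp⟩⟩

lemma clust_D {u : V} (hup : u ≠ p) (hu : u ∉ A) (h4 : 4 ≤ Fintype.card V) :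
    clust (acGraphI p A) u = 1 := by
  have hd := deg_D p A hup hu
  rw [clust, if_neg (by omega), triC, tri_D p A hup hu, Set.ncard_coe_finset,
    offDiag_card, card_erase_of_mem (by simp [hup.symm]),
    card_erase_of_mem (mem_univ u), card_univ, hd]
  exact ratio_one (by omega)

lemma totalFormula (hpA : p ∉ A) (h4 : 4 ≤ Fintype.card V) :
    totalClust (acGraphI p A) =
      1 + (A.card : ℚ) * (1 - ((Fintype.card V - 1 - A.card : ℕ) : ℚ) /
        (((Fintype.card V - 1).choose 2 : ℕ) : ℚ)) +
      ((Fintype.card V - 1 - A.card : ℕ) : ℚ) := by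
  have hmem : p ∉ A ∪ (univ \ insert p A) := by simp [hpA]
  have hdisj : Disjoint A (univ \ insert p A) := by
    rw [Finset.disjoint_left]
    intro a ha
    simp [ha]
  have huniv : (univ : Finset V) = insert p (A ∪ (univ \ insert p A)) := by
    ext v
    simp only [mem_univ, Finset.mem_insert, Finset.mem_union, Finset.mem_sdiff,
      true_iff, true_and]
    by_cases hvp : v = p
    · exact Or.inl hvp
    · by_cases hvA : v ∈ A
      · exact Or.inr (Or.inl hvA)
      · exact Or.inr (Or.inr (by simp [hvp, hvA]))
  have hsum1 : ∑ u ∈ A, clust (acGraphI p A) u =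
      A.card • (1 - ((Fintype.card V - 1 - A.card : ℕ) : ℚ) /
        (((Fintype.card V - 1).choose 2 : ℕ) : ℚ)) := by
    rw [Finset.sum_congr rfl (fun u hu => clust_A p A hpA hu h4), Finset.sum_const]
  have hsum2 : ∑ u ∈ univ \ insert p A, clust (acGraphI p A) u =
      ((Fintype.card V - 1 - A.card : ℕ) : ℚ) := by
    have step : ∀ u ∈ univ \ insert p A, clust (acGraphI p A) u = 1 := by
      intro u hu
      simp only [Finset.mem_sdiff, mem_univ, Finset.mem_insert, true_and, not_or] at hu
      exact clust_D p A hu.1 hu.2 h4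
    rw [Finset.sum_congr rfl step, Finset.sum_const, cardD p A hpA, nsmul_eq_mul, mul_one]
  rw [totalClust, huniv, Finset.sum_insert hmem, Finset.sum_union hdisj,
    clust_p p A hpA, hsum1, hsum2, nsmul_eq_mul]
  ring

end Aux

/-- The total clustering of the type I almost complete graph, as a function of the
peripheral degree `α`, is symmetric about `(N-1)/2`: its values at `α` and `N-1-α`
coincide. -/
theorem stmt9 {V : Type*} [Fintype V] [DecidableEq V] (p : V) (A B : Finset V)
    (hpA : p ∉ A) (hpB : p ∉ B) (h4 : 4 ≤ Fintype.card V)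
    (hA : 1 ≤ A.card) (hB : 1 ≤ B.card)
    (hsum : A.card + B.card = Fintype.card V - 1) :
    totalClust (acGraphI p A) = totalClust (acGraphI p B) := by
  have hNA : Fintype.card V - 1 - A.card = B.card := by omega
  have hNB : Fintype.card V - 1 - B.card = A.card := by omega
  rw [totalFormula p A hpA h4, totalFormula p B hpB h4, hNA, hNB]
  ring
end

section
/- Let G consist of a clique Q on N-2 vertices and two nonadjacent peripheral vertices u and v, with u adjacent to a + 0 common neighbors plus none, and v adjacent to those same a vertices plus b further clique vertices, so c = 2a + b edges go from {u,v} into Q with a ≥ 1. Then the total clustering equals N - a(1 + 2(N-2-a) - b)/binom(N-1,2) - b(N-2-a-b)/binom(N-2,2). -/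
open SimpleGraph Finset

/-- Type IIa almost complete graph: all vertices other than `u, v` form a clique,
`u` and `v` are nonadjacent, `u` is adjacent exactly to the vertices of `A`, and `v` is
adjacent exactly to the vertices of `A ∪ B`. -/
def acGraphII {V : Type*} [DecidableEq V] (u v : V) (A B : Finset V) : SimpleGraph V where
  Adj x y := x ≠ y ∧
    ((x ≠ u ∧ x ≠ v ∧ y ≠ u ∧ y ≠ v) ∨
     (x = u ∧ y ∈ A) ∨ (y = u ∧ x ∈ A) ∨
     (x = v ∧ y ∈ A ∪ B) ∨ (y = v ∧ x ∈ A ∪ B))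
  symm := ⟨by intro x y h; exact ⟨h.1.symm, by tauto⟩⟩
  loopless := ⟨fun x h => h.1 rfl⟩


lemma sq_sub (k : ℕ) : (k+1)*(k+1) - (k+1) = (k+1)*k := by
  rw [mul_add_one, Nat.add_sub_cancel]

lemma choose2_cast {k : ℕ} (h : 1 ≤ k) : ((k.choose 2 : ℕ) : ℚ) = k * ((k : ℚ) - 1) / 2 := by
  obtain ⟨m, rfl⟩ := Nat.exists_eq_add_of_le h
  have h2 : (1 + m).choose 2 * 2 = (1 + m) * m := by
    rw [Nat.choose_two_right]
    have he : 1 + m - 1 = m := by omega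
    rw [he, mul_comm ((1+m)*m/2) 2, Nat.mul_div_cancel']
    refine even_iff_two_dvd.mp ?_
    rw [add_comm, mul_comm]
    exact Nat.even_mul_succ_self m
  have h3 := congrArg (fun t : ℕ => (t : ℚ)) h2
  push_cast at h3 ⊢
  linarith

lemma deg_eq {V : Type*} [Fintype V] (G : SimpleGraph V) [DecidableRel G.Adj] (w : V) :
    deg G w = (G.neighborFinset w).card := by
  rw [deg, neighborFinset_def, Set.ncard_eq_toFinset_card']

lemma triC_eq {V : Type*} [Fintype V] (G : SimpleGraph V) [DecidableRel G.Adj] (w : V) :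
    triC G w = ((univ.filter fun p : V × V =>
      G.Adj w p.1 ∧ G.Adj w p.2 ∧ G.Adj p.1 p.2).card : ℚ) / 2 := by
  rw [triC]
  congr 2
  rw [show {p : V × V | G.Adj w p.1 ∧ G.Adj w p.2 ∧ G.Adj p.1 p.2}
      = ↑(univ.filter fun p : V × V => G.Adj w p.1 ∧ G.Adj w p.2 ∧ G.Adj p.1 p.2) by
    ext p; simp]
  rw [Set.ncard_coe_finset]

section
variable {V : Type*} [Fintype V] [DecidableEq V] (u v : V) (A B : Finset V)

instance : DecidableRel (acGraphII u v A B).Adj := fun x y =>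
  inferInstanceAs (Decidable (_ ∧ _))

omit [Fintype V] in
lemma adj_iff' (huv : u ≠ v) (hu : u ∉ A ∪ B) (hv : v ∉ A ∪ B) (x y : V) :
    (acGraphII u v A B).Adj x y ↔ x ≠ y ∧ (x = u → y ∈ A) ∧ (y = u → x ∈ A)
      ∧ (x = v → y ∈ A ∪ B) ∧ (y = v → x ∈ A ∪ B) := by
  simp only [mem_union, not_or] at hu hv
  show (x ≠ y ∧ _) ↔ _
  constructor
  · rintro ⟨hxy, h⟩
    refine ⟨hxy, ?_, ?_, ?_, ?_⟩ <;> intro he <;>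
      rcases h with h | h | h | h | h <;> simp_all [mem_union]
  · rintro ⟨hxy, h1, h2, h3, h4⟩
    refine ⟨hxy, ?_⟩
    by_cases hx1 : x = u
    · exact Or.inr (Or.inl ⟨hx1, h1 hx1⟩)
    by_cases hy1 : y = u
    · exact Or.inr (Or.inr (Or.inl ⟨hy1, h2 hy1⟩))
    by_cases hx2 : x = v
    · exact Or.inr (Or.inr (Or.inr (Or.inl ⟨hx2, h3 hx2⟩)))
    by_cases hy2 : y = v
    · exact Or.inr (Or.inr (Or.inr (Or.inr ⟨hy2, h4 hy2⟩)))
    exact Or.inl ⟨hx1, hx2, hy1, hy2⟩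


lemma nf_u (huv : u ≠ v) (hu : u ∉ A ∪ B) (hv : v ∉ A ∪ B) :
    (acGraphII u v A B).neighborFinset u = A := by
  ext x
  rw [mem_neighborFinset, adj_iff' u v A B huv hu hv]
  simp only [mem_union, not_or] at hu hv
  constructor
  · exact fun h => h.2.1 rfl
  · intro hx
    exact ⟨fun he => hu.1 (he ▸ hx), fun _ => hx, fun he => he ▸ hx,
      fun he => absurd he huv, fun he => absurd (he ▸ hx) hv.1⟩

lemma nf_v (huv : u ≠ v) (hu : u ∉ A ∪ B) (hv : v ∉ A ∪ B) :
    (acGraphII u v A B).neighborFinset v = A ∪ B := by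
  ext x
  rw [mem_neighborFinset, adj_iff' u v A B huv hu hv]
  constructor
  · intro h; exact h.2.2.2.1 rfl
  · intro hx
    refine ⟨fun he => hv (he ▸ hx), ?_, ?_, fun _ => hx, fun he => he ▸ hx⟩
    · intro he; exact absurd he.symm huv
    · intro he; exact absurd (he ▸ hx) hu

lemma nf_A (huv : u ≠ v) (hu : u ∉ A ∪ B) (hv : v ∉ A ∪ B) {w : V} (hw : w ∈ A) :
    (acGraphII u v A B).neighborFinset w = univ \ {w} := by
  have hwu : w ≠ u := by rintro rfl; exact hu (mem_union_left _ hw)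
  have hwv : w ≠ v := by rintro rfl; exact hv (mem_union_left _ hw)
  ext x
  rw [mem_neighborFinset, adj_iff' u v A B huv hu hv]
  simp only [mem_sdiff, mem_univ, mem_singleton, true_and]
  constructor
  · exact fun h => fun he => h.1 he.symm
  · intro hx
    exact ⟨fun he => hx he.symm, fun he => absurd he hwu, fun _ => hw,
      fun he => absurd he hwv, fun _ => mem_union_left _ hw⟩

lemma nf_B (huv : u ≠ v) (hu : u ∉ A ∪ B) (hv : v ∉ A ∪ B) (hAB : Disjoint A B)
    {w : V} (hw : w ∈ B) :
    (acGraphII u v A B).neighborFinset w = univ \ {u, w} := by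
  have hwu : w ≠ u := by rintro rfl; exact hu (mem_union_right _ hw)
  have hwv : w ≠ v := by rintro rfl; exact hv (mem_union_right _ hw)
  have hwA : w ∉ A := fun h => (Finset.disjoint_left.mp hAB h) hw
  ext x
  rw [mem_neighborFinset, adj_iff' u v A B huv hu hv]
  simp only [mem_sdiff, mem_univ, mem_insert, mem_singleton, true_and, not_or]
  constructor
  · intro h
    exact ⟨fun he => hwA (h.2.2.1 he), fun he => h.1 he.symm⟩
  · rintro ⟨hxu, hxw⟩
    exact ⟨fun he => hxw he.symm, fun he => absurd he hwu, fun he => absurd he hxu,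
      fun he => absurd he hwv, fun _ => mem_union_right _ hw⟩

lemma nf_R (huv : u ≠ v) (hu : u ∉ A ∪ B) (hv : v ∉ A ∪ B)
    {w : V} (hw : w ∉ A ∪ B) (hwu : w ≠ u) (hwv : w ≠ v) :
    (acGraphII u v A B).neighborFinset w = univ \ {u, v, w} := by
  ext x
  rw [mem_neighborFinset, adj_iff' u v A B huv hu hv]
  simp only [mem_sdiff, mem_univ, mem_insert, mem_singleton, true_and, not_or]
  constructor
  · intro h
    exact ⟨fun he => hw (mem_union_left _ (h.2.2.1 he)),
      fun he => hw (h.2.2.2.2 he), fun he => h.1 he.symm⟩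
  · rintro ⟨hxu, hxv, hxw⟩
    exact ⟨fun he => hxw he.symm, fun he => absurd he hwu, fun he => absurd he hxu,
      fun he => absurd he hwv, fun he => absurd he hxv⟩

-- clique adjacency
omit [Fintype V] in
lemma adj_QQ (huv : u ≠ v) (hu : u ∉ A ∪ B) (hv : v ∉ A ∪ B) {x y : V}
    (hx : x ≠ u) (hxv : x ≠ v) (hy : y ≠ u) (hyv : y ≠ v) (hxy : x ≠ y) :
    (acGraphII u v A B).Adj x y := by
  rw [adj_iff' u v A B huv hu hv]
  exact ⟨hxy, fun h => absurd h hx, fun h => absurd h hy,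
    fun h => absurd h hxv, fun h => absurd h hyv⟩

lemma P_u_eq (huv : u ≠ v) (hu : u ∉ A ∪ B) (hv : v ∉ A ∪ B) :
    (univ.filter fun p : V × V => (acGraphII u v A B).Adj u p.1 ∧
      (acGraphII u v A B).Adj u p.2 ∧ (acGraphII u v A B).Adj p.1 p.2) = A.offDiag := by
  have hadj : ∀ x, (acGraphII u v A B).Adj u x ↔ x ∈ A := fun x => by
    rw [← mem_neighborFinset, nf_u u v A B huv hu hv]
  simp only [mem_union, not_or] at hu hv
  ext ⟨x, y⟩
  simp only [mem_filter, mem_univ, true_and, mem_offDiag, hadj]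
  constructor
  · rintro ⟨hx, hy, hadj'⟩; exact ⟨hx, hy, hadj'.ne⟩
  · rintro ⟨hx, hy, hne⟩
    refine ⟨hx, hy, adj_QQ u v A B huv (by simp [mem_union, not_or]; tauto)
      (by simp [mem_union, not_or]; tauto) ?_ ?_ ?_ ?_ hne⟩
    · rintro rfl; exact hu.1 hx
    · rintro rfl; exact hv.1 hx
    · rintro rfl; exact hu.1 hy
    · rintro rfl; exact hv.1 hy

lemma P_v_eq (huv : u ≠ v) (hu : u ∉ A ∪ B) (hv : v ∉ A ∪ B) :
    (univ.filter fun p : V × V => (acGraphII u v A B).Adj v p.1 ∧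
      (acGraphII u v A B).Adj v p.2 ∧ (acGraphII u v A B).Adj p.1 p.2) = (A ∪ B).offDiag := by
  have hadj : ∀ x, (acGraphII u v A B).Adj v x ↔ x ∈ A ∪ B := fun x => by
    rw [← mem_neighborFinset, nf_v u v A B huv hu hv]
  ext ⟨x, y⟩
  simp only [mem_filter, mem_univ, true_and, mem_offDiag, hadj]
  constructor
  · rintro ⟨hx, hy, hadj'⟩; exact ⟨hx, hy, hadj'.ne⟩
  · rintro ⟨hx, hy, hne⟩
    refine ⟨hx, hy, adj_QQ u v A B huv hu hv ?_ ?_ ?_ ?_ hne⟩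
    · rintro rfl; exact hu hx
    · rintro rfl; exact hv hx
    · rintro rfl; exact hu hy
    · rintro rfl; exact hv hy

lemma P_R_eq (huv : u ≠ v) (hu : u ∉ A ∪ B) (hv : v ∉ A ∪ B)
    {w : V} (hw : w ∉ A ∪ B) (hwu : w ≠ u) (hwv : w ≠ v) :
    (univ.filter fun p : V × V => (acGraphII u v A B).Adj w p.1 ∧
      (acGraphII u v A B).Adj w p.2 ∧ (acGraphII u v A B).Adj p.1 p.2)
      = (univ \ {u, v, w}).offDiag := by
  have hadj : ∀ x, (acGraphII u v A B).Adj w x ↔ x ∈ univ \ ({u, v, w} : Finset V) := fun x => by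
    rw [← mem_neighborFinset, nf_R u v A B huv hu hv hw hwu hwv]
  ext ⟨x, y⟩
  simp only [mem_filter, mem_univ, true_and, mem_offDiag, hadj]
  constructor
  · rintro ⟨hx, hy, hadj'⟩; exact ⟨hx, hy, hadj'.ne⟩
  · rintro ⟨hx, hy, hne⟩
    simp only [mem_sdiff, mem_univ, mem_insert, mem_singleton, true_and, not_or] at hx hy
    exact ⟨by simp [mem_sdiff, mem_insert, not_or]; tauto,
      by simp [mem_sdiff, mem_insert, not_or]; tauto,
      adj_QQ u v A B huv hu hv hx.1 hx.2.1 hy.1 hy.2.1 hne⟩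

lemma P_A_eq (huv : u ≠ v) (hu : u ∉ A ∪ B) (hv : v ∉ A ∪ B) {w : V} (hw : w ∈ A) :
    (univ.filter fun p : V × V => (acGraphII u v A B).Adj w p.1 ∧
      (acGraphII u v A B).Adj w p.2 ∧ (acGraphII u v A B).Adj p.1 p.2)
      = (univ \ {w}).offDiag \
        ((({u} : Finset V) ×ˢ (insert u A)ᶜ ∪ (insert u A)ᶜ ×ˢ ({u} : Finset V)) ∪
         (({v} : Finset V) ×ˢ (insert u (insert v (A ∪ B)))ᶜ ∪
          (insert u (insert v (A ∪ B)))ᶜ ×ˢ ({v} : Finset V))) := by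
  have hadj : ∀ x, (acGraphII u v A B).Adj w x ↔ x ≠ w := fun x => by
    rw [← mem_neighborFinset, nf_A u v A B huv hu hv hw]
    simp
  have hvA : v ∉ A := fun h => hv (mem_union_left _ h)
  have huA : u ∉ A := fun h => hu (mem_union_left _ h)
  ext ⟨x, y⟩
  simp only [mem_filter, mem_univ, true_and, mem_sdiff, mem_offDiag, mem_union, mem_product,
    mem_singleton, mem_compl, mem_insert, not_or, mem_union, hadj]
  constructor
  · rintro ⟨hx, hy, hadj'⟩
    obtain ⟨hne, h1, h2, h3, h4⟩ := (adj_iff' u v A B huv hu hv _ _).mp hadj'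
    refine ⟨⟨hx, hy, hne⟩, ⟨?_, ?_⟩, ?_, ?_⟩
    · rintro ⟨he, -, hyA⟩; exact hyA (h1 he)
    · rintro ⟨⟨-, hxA⟩, he⟩; exact hxA (h2 he)
    · rintro ⟨he, -, -, hyA, hyB⟩
      rcases mem_union.mp (h3 he) with h | h
      exacts [hyA h, hyB h]
    · rintro ⟨⟨-, -, hxA, hxB⟩, he⟩
      rcases mem_union.mp (h4 he) with h | h
      exacts [hxA h, hxB h]
  · rintro ⟨⟨hx, hy, hne⟩, ⟨g1, g2⟩, g3, g4⟩
    refine ⟨hx, hy, (adj_iff' u v A B huv hu hv _ _).mpr ⟨hne, ?_, ?_, ?_, ?_⟩⟩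
    · intro he; by_contra hyA
      exact g1 ⟨he, fun h => hne (he.trans h.symm), hyA⟩
    · intro he; by_contra hxA
      exact g2 ⟨⟨fun h => hne (h.trans he.symm), hxA⟩, he⟩
    · intro he
      by_cases hyu : y = u
      · exfalso
        by_cases hxu : x = u
        · exact huv (hxu.symm.trans he)
        · have hxA : x ∈ A := by by_contra hxA; exact g2 ⟨⟨hxu, hxA⟩, hyu⟩
          exact hvA (he ▸ hxA)
      · by_contra hyAB
        rw [mem_union] at hyAB; push_neg at hyAB
        exact g3 ⟨he, hyu, fun h => hne (he.trans h.symm), hyAB.1, hyAB.2⟩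
    · intro he
      by_cases hxu : x = u
      · exfalso
        have h' : y = u ∨ y ∈ A := by
          by_contra h; push_neg at h; exact g1 ⟨hxu, h.1, h.2⟩
        rcases h' with h | h
        · exact huv (h.symm.trans he)
        · exact hvA (he ▸ h)
      · by_contra hxAB
        rw [mem_union] at hxAB; push_neg at hxAB
        exact g4 ⟨⟨hxu, fun h => hne (h.trans he.symm), hxAB.1, hxAB.2⟩, he⟩

lemma P_B_eq (huv : u ≠ v) (hu : u ∉ A ∪ B) (hv : v ∉ A ∪ B) (hAB : Disjoint A B)
    {w : V} (hw : w ∈ B) :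
    (univ.filter fun p : V × V => (acGraphII u v A B).Adj w p.1 ∧
      (acGraphII u v A B).Adj w p.2 ∧ (acGraphII u v A B).Adj p.1 p.2)
      = (univ \ {u, w}).offDiag \
        (({v} : Finset V) ×ˢ (insert u (insert v (A ∪ B)))ᶜ ∪
          (insert u (insert v (A ∪ B)))ᶜ ×ˢ ({v} : Finset V)) := by
  have hadj : ∀ x, (acGraphII u v A B).Adj w x ↔ ¬x = u ∧ ¬x = w := fun x => by
    rw [← mem_neighborFinset, nf_B u v A B huv hu hv hAB hw]
    simp [not_or]
  ext ⟨x, y⟩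
  simp only [mem_filter, mem_univ, true_and, mem_sdiff, mem_offDiag, mem_union, mem_product,
    mem_singleton, mem_compl, mem_insert, not_or, mem_union, hadj]
  constructor
  · rintro ⟨hx, hy, hadj'⟩
    obtain ⟨hne, h1, h2, h3, h4⟩ := (adj_iff' u v A B huv hu hv _ _).mp hadj'
    refine ⟨⟨⟨hx.1, hx.2⟩, ⟨hy.1, hy.2⟩, hne⟩, ?_, ?_⟩
    · rintro ⟨he, -, -, hyA, hyB⟩
      rcases mem_union.mp (h3 he) with h | h
      exacts [hyA h, hyB h]
    · rintro ⟨⟨-, -, hxA, hxB⟩, he⟩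
      rcases mem_union.mp (h4 he) with h | h
      exacts [hxA h, hxB h]
  · rintro ⟨⟨⟨hxu, hxw⟩, ⟨hyu, hyw⟩, hne⟩, g3, g4⟩
    refine ⟨⟨hxu, hxw⟩, ⟨hyu, hyw⟩,
      (adj_iff' u v A B huv hu hv _ _).mpr ⟨hne, ?_, ?_, ?_, ?_⟩⟩
    · intro he; exact absurd he hxu
    · intro he; exact absurd he hyu
    · intro he
      by_contra hyAB
      rw [mem_union] at hyAB; push_neg at hyAB
      exact g3 ⟨he, hyu, fun h => hne (he.trans h.symm), hyAB.1, hyAB.2⟩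
    · intro he
      by_contra hxAB
      rw [mem_union] at hxAB; push_neg at hxAB
      exact g4 ⟨⟨hxu, fun h => hne (h.trans he.symm), hxAB.1, hxAB.2⟩, he⟩

lemma clust_one (G : SimpleGraph V) [DecidableRel G.Adj] (w : V) (S : Finset V)
    (hS : G.neighborFinset w = S)
    (hP : (univ.filter fun p : V × V => G.Adj w p.1 ∧ G.Adj w p.2 ∧ G.Adj p.1 p.2)
      = S.offDiag) :
    clust G w = 1 := by
  rw [clust]
  by_cases h1 : deg G w ≤ 1
  · simp [h1]
  · rw [if_neg h1, triC_eq, hP, offDiag_card]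
    rw [deg_eq, hS] at h1 ⊢
    push_neg at h1
    obtain ⟨k, hk⟩ : ∃ k, S.card = k + 1 := ⟨S.card - 1, by omega⟩
    rw [hk, sq_sub, choose2_cast (by omega : 1 ≤ k + 1)]
    have hkpos : (0:ℚ) < ((k:ℚ)+1) * k := by
      have h2 : 1 ≤ k := by omega
      have : (1:ℚ) ≤ (k:ℚ) := by exact_mod_cast h2
      nlinarith
    push_cast
    rw [show ((k:ℚ)+1-1) = (k:ℚ) by ring]
    exact div_self (ne_of_gt (by linarith))
end

set_option maxHeartbeats 2000000 in
/-- Total clustering of the type IIa almost complete graph with `a = |A|` common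
neighbors and `b = |B|` extra neighbors of `v`:
`N - a(1 + 2(N-2-a) - b)/((N-1) choose 2) - b(N-2-a-b)/((N-2) choose 2)`. -/
theorem stmt13 {V : Type*} [Fintype V] [DecidableEq V] (u v : V) (A B : Finset V)
    (huv : u ≠ v) (hu : u ∉ A ∪ B) (hv : v ∉ A ∪ B) (hAB : Disjoint A B)
    (ha : 1 ≤ A.card) (h5 : 5 ≤ Fintype.card V) :
    totalClust (acGraphII u v A B) =
      (Fintype.card V : ℚ)
      - (A.card : ℚ) * (1 + 2 * ((Fintype.card V : ℚ) - 2 - A.card) - B.card) /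
          ((Fintype.card V - 1).choose 2 : ℚ)
      - (B.card : ℚ) * ((Fintype.card V : ℚ) - 2 - A.card - B.card) /
          ((Fintype.card V - 2).choose 2 : ℚ) := by
  set n := Fintype.card V with hndef
  set a := A.card with hadef
  set b := B.card with hbdef
  have huA : u ∉ A := fun h => hu (mem_union_left _ h)
  have hvA : v ∉ A := fun h => hv (mem_union_left _ h)
  have hvins : u ∉ insert v (A ∪ B) := by
    simp only [mem_insert, not_or]; exact ⟨huv, hu⟩
  obtain ⟨c, hc⟩ : ∃ c, ((insert u (insert v (A ∪ B)))ᶜ).card = c := ⟨_, rfl⟩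
  have hins : (insert u (insert v (A ∪ B))).card = a + b + 2 := by
    rw [card_insert_of_notMem hvins, card_insert_of_notMem hv, card_union_of_disjoint hAB]
  have hn : n = a + b + c + 2 := by
    have h := Finset.card_add_card_compl (insert u (insert v (A ∪ B)))
    rw [hins, hc] at h
    omega
  have hs3 : 3 ≤ a + b + c := by omega
  have hTu : ((insert u A)ᶜ).card = b + c + 1 := by
    rw [card_compl, card_insert_of_notMem huA]
    omega
  -- clustering coefficients equal to 1
  have hcu : clust (acGraphII u v A B) u = 1 :=
    clust_one (acGraphII u v A B) u A (nf_u u v A B huv hu hv) (P_u_eq u v A B huv hu hv)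
  have hcv : clust (acGraphII u v A B) v = 1 :=
    clust_one (acGraphII u v A B) v (A ∪ B) (nf_v u v A B huv hu hv) (P_v_eq u v A B huv hu hv)
  have hcR : ∀ w ∈ (insert u (insert v (A ∪ B)))ᶜ, clust (acGraphII u v A B) w = 1 := by
    intro w hw
    rw [mem_compl, mem_insert, mem_insert] at hw
    push_neg at hw
    exact clust_one (acGraphII u v A B) w _ (nf_R u v A B huv hu hv hw.2.2 hw.1 hw.2.1)
      (P_R_eq u v A B huv hu hv hw.2.2 hw.1 hw.2.1)
  -- clustering on A
  have hcA : ∀ w ∈ A, clust (acGraphII u v A B) w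
      = 1 - ((b:ℚ) + 2*(c:ℚ) + 1) / (((a+b+c+1).choose 2 : ℕ) : ℚ) := by
    intro w hw
    have hdegw : deg (acGraphII u v A B) w = a + b + c + 1 := by
      rw [deg_eq, nf_A u v A B huv hu hv hw, card_sdiff_of_subset (by simp), card_univ, card_singleton]
      omega
    have hMsub : (({u} : Finset V) ×ˢ (insert u A)ᶜ ∪ (insert u A)ᶜ ×ˢ ({u} : Finset V)) ∪
         (({v} : Finset V) ×ˢ (insert u (insert v (A ∪ B)))ᶜ ∪
          (insert u (insert v (A ∪ B)))ᶜ ×ˢ ({v} : Finset V)) ⊆ (univ \ {w}).offDiag := by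
      rintro ⟨x, y⟩ hxy
      simp only [mem_union, mem_product, mem_singleton, mem_compl, mem_insert, not_or,
        mem_union] at hxy
      simp only [mem_offDiag, mem_sdiff, mem_univ, mem_singleton, true_and]
      rcases hxy with (⟨hx, hy⟩ | ⟨hx, hy⟩) | (⟨hx, hy⟩ | ⟨hx, hy⟩)
      · exact ⟨by rintro rfl; exact huA (hx ▸ hw), by rintro rfl; exact hy.2 hw,
          by rintro rfl; exact hy.1 hx⟩
      · exact ⟨by rintro rfl; exact hx.2 hw, by rintro rfl; exact huA (hy ▸ hw),
          by rintro rfl; exact hx.1 hy⟩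
      · exact ⟨by rintro rfl; exact hvA (hx ▸ hw), by rintro rfl; exact hy.2.2.1 hw,
          by rintro rfl; exact hy.2.1 hx⟩
      · exact ⟨by rintro rfl; exact hx.2.2.1 hw, by rintro rfl; exact hvA (hy ▸ hw),
          by rintro rfl; exact hx.2.1 hy⟩
    have d1 : Disjoint (({u} : Finset V) ×ˢ (insert u A)ᶜ) ((insert u A)ᶜ ×ˢ ({u} : Finset V)) := by
      rw [Finset.disjoint_left]
      rintro ⟨x, y⟩ h1 h2
      simp only [mem_product, mem_singleton, mem_compl, mem_insert, not_or] at h1 h2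
      exact h2.1.1 h1.1
    have d2 : Disjoint (({v} : Finset V) ×ˢ (insert u (insert v (A ∪ B)))ᶜ)
        ((insert u (insert v (A ∪ B)))ᶜ ×ˢ ({v} : Finset V)) := by
      rw [Finset.disjoint_left]
      rintro ⟨x, y⟩ h1 h2
      simp only [mem_product, mem_singleton, mem_compl, mem_insert, not_or] at h1 h2
      exact h2.1.2.1 h1.1
    have d3 : Disjoint
        (({u} : Finset V) ×ˢ (insert u A)ᶜ ∪ (insert u A)ᶜ ×ˢ ({u} : Finset V))
        (({v} : Finset V) ×ˢ (insert u (insert v (A ∪ B)))ᶜ ∪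
          (insert u (insert v (A ∪ B)))ᶜ ×ˢ ({v} : Finset V)) := by
      rw [Finset.disjoint_left]
      rintro ⟨x, y⟩ h1 h2
      simp only [mem_union, mem_product, mem_singleton, mem_compl, mem_insert, not_or] at h1 h2
      rcases h1 with ⟨hx, hy⟩ | ⟨hx, hy⟩ <;> rcases h2 with ⟨hx', hy'⟩ | ⟨hx', hy'⟩
      · exact huv (hx.symm.trans hx')
      · exact hx'.1 hx
      · exact hy'.1 hy
      · exact huv (hy.symm.trans hy')
    have hMcard : ((({u} : Finset V) ×ˢ (insert u A)ᶜ ∪ (insert u A)ᶜ ×ˢ ({u} : Finset V)) ∪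
         (({v} : Finset V) ×ˢ (insert u (insert v (A ∪ B)))ᶜ ∪
          (insert u (insert v (A ∪ B)))ᶜ ×ˢ ({v} : Finset V))).card = 2*(b+c+1) + 2*c := by
      rw [card_union_of_disjoint d3, card_union_of_disjoint d1, card_union_of_disjoint d2,
        card_product, card_product, card_product, card_product]
      simp only [card_singleton, hTu, hc]
      ring
    have hoff : ((univ \ {w}).offDiag).card = (a+b+c+1)*(a+b+c) := by
      rw [offDiag_card, card_sdiff_of_subset (by simp), card_univ, card_singleton]
      have he : n - 1 = a+b+c+1 := by omega
      rw [he, sq_sub]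
    have hPcard : (univ.filter fun p : V × V => (acGraphII u v A B).Adj w p.1 ∧ (acGraphII u v A B).Adj w p.2 ∧ (acGraphII u v A B).Adj p.1 p.2).card
        = (a+b+c+1)*(a+b+c) - (2*(b+c+1) + 2*c) := by
      rw [show (univ.filter fun p : V × V => (acGraphII u v A B).Adj w p.1 ∧ (acGraphII u v A B).Adj w p.2 ∧ (acGraphII u v A B).Adj p.1 p.2)
          = _ from P_A_eq u v A B huv hu hv hw, card_sdiff_of_subset hMsub, hoff, hMcard]
    have hle : 2*(b+c+1) + 2*c ≤ (a+b+c+1)*(a+b+c) := by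
      have h := card_le_card hMsub
      rw [hMcard, hoff] at h
      exact h
    rw [clust, if_neg (show ¬(deg (acGraphII u v A B) w ≤ 1) by rw [hdegw]; omega), triC_eq, hPcard, hdegw,
      choose2_cast (show 1 ≤ a+b+c+1 by omega), Nat.cast_sub hle]
    have hq : (3:ℚ) ≤ (a:ℚ)+(b:ℚ)+(c:ℚ) := by exact_mod_cast hs3
    push_cast
    have hne1 : ((a:ℚ)+b+c+1) ≠ 0 := by linarith
    have hne2 : ((a:ℚ)+b+c) ≠ 0 := by linarith
    rw [show ((a:ℚ)+b+c+1 - 1) = ((a:ℚ)+b+c) by ring]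
    field_simp
    ring
  -- clustering on B
  have hcB : ∀ w ∈ B, clust (acGraphII u v A B) w
      = 1 - (c:ℚ) / (((a+b+c).choose 2 : ℕ) : ℚ) := by
    intro w hw
    have huB : u ∉ B := fun h => hu (mem_union_right _ h)
    have hvB : v ∉ B := fun h => hv (mem_union_right _ h)
    have hdegw : deg (acGraphII u v A B) w = a + b + c := by
      rw [deg_eq, nf_B u v A B huv hu hv hAB hw, card_sdiff_of_subset (by
        intro x hx; exact mem_univ x), card_univ]
      rw [card_insert_of_notMem (by simp only [mem_singleton]; rintro rfl; exact huB hw),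
        card_singleton]
      omega
    have hMsub : (({v} : Finset V) ×ˢ (insert u (insert v (A ∪ B)))ᶜ ∪
          (insert u (insert v (A ∪ B)))ᶜ ×ˢ ({v} : Finset V)) ⊆ (univ \ {u, w}).offDiag := by
      rintro ⟨x, y⟩ hxy
      simp only [mem_union, mem_product, mem_singleton, mem_compl, mem_insert, not_or,
        mem_union] at hxy
      simp only [mem_offDiag, mem_sdiff, mem_univ, mem_insert, mem_singleton, true_and, not_or]
      rcases hxy with ⟨hx, hy⟩ | ⟨hx, hy⟩
      · exact ⟨⟨by rintro rfl; exact huv hx, by rintro rfl; exact hvB (hx ▸ hw)⟩,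
          ⟨hy.1, by rintro rfl; exact hy.2.2.2 hw⟩, by rintro rfl; exact hy.2.1 hx⟩
      · exact ⟨⟨hx.1, by rintro rfl; exact hx.2.2.2 hw⟩,
          ⟨by rintro rfl; exact huv hy, by rintro rfl; exact hvB (hy ▸ hw)⟩,
          by rintro rfl; exact hx.2.1 hy⟩
    have d2 : Disjoint (({v} : Finset V) ×ˢ (insert u (insert v (A ∪ B)))ᶜ)
        ((insert u (insert v (A ∪ B)))ᶜ ×ˢ ({v} : Finset V)) := by
      rw [Finset.disjoint_left]
      rintro ⟨x, y⟩ h1 h2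
      simp only [mem_product, mem_singleton, mem_compl, mem_insert, not_or] at h1 h2
      exact h2.1.2.1 h1.1
    have hMcard : ((({v} : Finset V) ×ˢ (insert u (insert v (A ∪ B)))ᶜ ∪
          (insert u (insert v (A ∪ B)))ᶜ ×ˢ ({v} : Finset V))).card = 2*c := by
      rw [card_union_of_disjoint d2, card_product, card_product]
      simp only [card_singleton, hc]
      ring
    have hoff : ((univ \ {u, w}).offDiag).card = (a+b+c)*(a+b+c) - (a+b+c) := by
      rw [offDiag_card, card_sdiff_of_subset (by intro x hx; exact mem_univ x), card_univ]
      rw [card_insert_of_notMem (by simp only [mem_singleton]; rintro rfl; exact huB hw),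
        card_singleton]
      have he : n - 2 = a+b+c := by omega
      rw [he]
    have hsq : (a+b+c)*(a+b+c) - (a+b+c) = (a+b+c)*(a+b+c-1) := by
      obtain ⟨t, ht⟩ : ∃ t, a+b+c = t+1 := ⟨a+b+c-1, by omega⟩
      rw [ht, sq_sub, Nat.add_sub_cancel]
    have hPcard : (univ.filter fun p : V × V => (acGraphII u v A B).Adj w p.1 ∧ (acGraphII u v A B).Adj w p.2 ∧ (acGraphII u v A B).Adj p.1 p.2).card
        = (a+b+c)*(a+b+c-1) - 2*c := by
      rw [show (univ.filter fun p : V × V => (acGraphII u v A B).Adj w p.1 ∧ (acGraphII u v A B).Adj w p.2 ∧ (acGraphII u v A B).Adj p.1 p.2)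
          = _ from P_B_eq u v A B huv hu hv hAB hw, card_sdiff_of_subset hMsub, hoff, hMcard, hsq]
    have hle : 2*c ≤ (a+b+c)*(a+b+c-1) := by
      have h := card_le_card hMsub
      rw [hMcard, hoff, hsq] at h
      exact h
    rw [clust, if_neg (show ¬(deg (acGraphII u v A B) w ≤ 1) by rw [hdegw]; omega), triC_eq, hPcard, hdegw,
      choose2_cast (show 1 ≤ a+b+c by omega), Nat.cast_sub hle]
    have hq : (3:ℚ) ≤ (a:ℚ)+(b:ℚ)+(c:ℚ) := by exact_mod_cast hs3
    rw [Nat.cast_mul, Nat.cast_sub (show 1 ≤ a+b+c by omega)]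
    push_cast
    have hne1 : ((a:ℚ)+b+c) ≠ 0 := by linarith
    have hne2 : ((a:ℚ)+b+c-1) ≠ 0 := by linarith
    field_simp
  -- assemble
  rw [totalClust]
  rw [show (univ : Finset V) = (insert u (insert v (A ∪ B))) ∪ (insert u (insert v (A ∪ B)))ᶜ
      from (union_compl _).symm]
  rw [sum_union disjoint_compl_right, sum_insert hvins, sum_insert hv, sum_union hAB,
    hcu, hcv, sum_congr rfl hcA, sum_congr rfl hcB, sum_congr rfl hcR,
    sum_const, sum_const, sum_const, hc, nsmul_eq_mul, nsmul_eq_mul, nsmul_eq_mul]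
  rw [show n - 1 = a+b+c+1 by omega, show n - 2 = a+b+c by omega, hn,
    choose2_cast (show 1 ≤ a+b+c+1 by omega), choose2_cast (show 1 ≤ a+b+c by omega)]
  have hq : (3:ℚ) ≤ (a:ℚ)+(b:ℚ)+(c:ℚ) := by exact_mod_cast hs3
  push_cast
  have hne1 : ((a:ℚ)+b+c+1) ≠ 0 := by linarith
  have hne2 : ((a:ℚ)+b+c) ≠ 0 := by linarith
  have hne3 : ((a:ℚ)+b+c-1) ≠ 0 := by linarith
  rw [show ((a:ℚ)+b+c+1 - 1) = ((a:ℚ)+b+c) by ring]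
  field_simp
  ring
end
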